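/- arXiv:1309.3801 — 7 statements merged into one kernel-verified Lean document; each statement's English description precedes it below -/
import Mathlib

section
/- Let R be a commutative ring, m ≥ 1, and C an m×m matrix over R with adjugate A. Fix an integer j with 0 ≤ j < m, indices 1 ≤ k₁ < k₂ < … < k_j ≤ m, and an integer s with 1 ≤ s ≤ j+1. Then ∑_{a=1}^{m} C(1,…,j+1 | k₁,…,k_j,a) · A_{a,s} = (−1)^{s+j+1} · C(1,…,ŝ,…,j+1 | k₁,…,k_j) · det(C), where ŝ indicates that the row index s is omitted from the list 1,…,j+1. -/
/-- Let `R` be a commutative ring, `m ≥ 1`, and `C` an `m×m` matrix over `R`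
with adjugate `A`.  Fix `0 ≤ j < m`, strictly increasing indices `k₁ < … < k_j` in `{1,…,m}`,
and `s` with `1 ≤ s ≤ j+1` (encoded as `s : Fin (j+1)`).  Then
`∑_{a=1}^{m} C(1,…,j+1 | k₁,…,k_j,a) · A_{a,s}
  = (−1)^{s+j+1} · C(1,…,ŝ,…,j+1 | k₁,…,k_j) · det C`.
(The sign `(−1)^{s+j+1}` with 1-based `s` equals `(−1)^{s₀+j}` for the 0-based `s₀ = s - 1`.) -/
theorem stmt0 {R : Type*} [CommRing R] {m j : ℕ} (hm : 1 ≤ m) (hj : j + 1 ≤ m)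
    (C : Matrix (Fin m) (Fin m) R) (k : Fin j → Fin m) (hk : StrictMono k)
    (s : Fin (j + 1)) :
    ∑ a : Fin m,
        (Matrix.of fun u v : Fin (j + 1) => C (Fin.castLE hj u) ((Fin.snoc k a : Fin (j+1) → Fin m) v)).det *
          C.adjugate a (Fin.castLE hj s)
      = (-1 : R) ^ ((s : ℕ) + j) *
          (Matrix.of fun u v : Fin j => C (Fin.castLE hj (s.succAbove u)) (k v)).det *
          C.det := by
  have key : ∀ a : Fin m,
      (Matrix.of fun u v : Fin (j + 1) =>
          C (Fin.castLE hj u) ((Fin.snoc k a : Fin (j+1) → Fin m) v)).det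
      = ∑ u : Fin (j+1), (-1:R)^((u:ℕ)+j) * C (Fin.castLE hj u) a *
          (Matrix.of fun u' v : Fin j => C (Fin.castLE hj (u.succAbove u')) (k v)).det := by
    intro a
    rw [Matrix.det_succ_column _ (Fin.last j)]
    refine Finset.sum_congr rfl fun u _ => ?_
    have hsub : (Matrix.of fun u v : Fin (j + 1) =>
        C (Fin.castLE hj u) ((Fin.snoc k a : Fin (j+1) → Fin m) v)).submatrix
          u.succAbove (Fin.last j).succAbove
        = Matrix.of fun u' v : Fin j => C (Fin.castLE hj (u.succAbove u')) (k v) := by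
      ext u' v
      simp [Matrix.submatrix_apply, Fin.succAbove_last, Fin.snoc_castSucc]
    rw [hsub]
    simp [Fin.snoc_last]
  simp_rw [key, Finset.sum_mul]
  rw [Finset.sum_comm]
  have hmul : ∀ u : Fin (j+1),
      ∑ a : Fin m, (-1:R)^((u:ℕ)+j) * C (Fin.castLE hj u) a *
          (Matrix.of fun u' v : Fin j => C (Fin.castLE hj (u.succAbove u')) (k v)).det *
          C.adjugate a (Fin.castLE hj s)
      = (-1:R)^((u:ℕ)+j) *
          (Matrix.of fun u' v : Fin j => C (Fin.castLE hj (u.succAbove u')) (k v)).det *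
          (if u = s then C.det else 0) := by
    intro u
    have : ∑ a : Fin m, C (Fin.castLE hj u) a * C.adjugate a (Fin.castLE hj s)
        = (C * C.adjugate) (Fin.castLE hj u) (Fin.castLE hj s) := by
      rw [Matrix.mul_apply]
    have h2 : (C * C.adjugate) (Fin.castLE hj u) (Fin.castLE hj s)
        = if u = s then C.det else 0 := by
      rw [Matrix.mul_adjugate]
      simp [Matrix.one_apply, Fin.castLE_inj]
    calc ∑ a : Fin m, (-1:R)^((u:ℕ)+j) * C (Fin.castLE hj u) a *
          (Matrix.of fun u' v : Fin j => C (Fin.castLE hj (u.succAbove u')) (k v)).det *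
          C.adjugate a (Fin.castLE hj s)
        = (-1:R)^((u:ℕ)+j) *
          (Matrix.of fun u' v : Fin j => C (Fin.castLE hj (u.succAbove u')) (k v)).det *
          ∑ a : Fin m, C (Fin.castLE hj u) a * C.adjugate a (Fin.castLE hj s) := by
          rw [Finset.mul_sum]; refine Finset.sum_congr rfl fun a _ => ?_; ring
      _ = _ := by rw [this, h2]
  simp_rw [hmul]
  simp [mul_ite, mul_zero, Finset.sum_ite_eq']
end

section
/- Let R be a commutative ring, m ≥ 1, and C an m×m matrix over R with adjugate A. Fix an integer j with 0 ≤ j < m, indices 1 ≤ k₁ < k₂ < … < k_j ≤ m, and an integer s with j+1 < s ≤ m. Then ∑_{a=1}^{m} C(1,…,j+1 | k₁,…,k_j,a) · A_{a,s} = 0. -/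
/-- Let `R` be a commutative ring, `m ≥ 1`, and `C` an `m×m` matrix over `R`
with adjugate `A`.  Fix `0 ≤ j < m`, strictly increasing indices `k₁ < … < k_j` in `{1,…,m}`,
and `s` with `j+1 < s ≤ m` (encoded as `s : Fin m` with `j < s` for the 0-based value).  Then
`∑_{a=1}^{m} C(1,…,j+1 | k₁,…,k_j,a) · A_{a,s} = 0`. -/
theorem stmt1 {R : Type*} [CommRing R] {m j : ℕ} (hm : 1 ≤ m) (hj : j + 1 ≤ m)
    (C : Matrix (Fin m) (Fin m) R) (k : Fin j → Fin m) (hk : StrictMono k)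
    (s : Fin m) (hs : j < (s : ℕ)) :
    ∑ a : Fin m,
        (Matrix.of fun u v : Fin (j + 1) =>
            C (Fin.castLE hj u) ((Fin.snoc k a : Fin (j+1) → Fin m) v)).det *
          C.adjugate a s
      = 0 := by
  have hne : ∀ u : Fin (j + 1), Fin.castLE hj u ≠ s := by
    intro u h
    have h' := congrArg Fin.val h
    simp only [Fin.coe_castLE] at h'
    have := u.isLt
    omega
  have hzero : ∀ i : Fin m, i ≠ s → ∑ a : Fin m, C i a * C.adjugate a s = 0 := by
    intro i hi
    have h := congrFun (congrFun (Matrix.mul_adjugate C) i) s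
    simpa [Matrix.mul_apply, Matrix.one_apply, hi] using h
  have expand : ∀ a : Fin m,
      (Matrix.of fun u v : Fin (j + 1) =>
          C (Fin.castLE hj u) ((Fin.snoc k a : Fin (j+1) → Fin m) v)).det
        = ∑ u : Fin (j + 1), (-1 : R) ^ ((u : ℕ) + (Fin.last j : ℕ)) *
            C (Fin.castLE hj u) a *
            (Matrix.of fun p q : Fin j =>
              C (Fin.castLE hj (u.succAbove p)) (k q)).det := by
    intro a
    rw [Matrix.det_succ_column _ (Fin.last j)]
    refine Finset.sum_congr rfl fun u _ => ?_
    congr 1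
    · simp
    · congr 1
      ext p q
      simp [Matrix.submatrix_apply, Fin.succAbove_last, Fin.snoc_castSucc]
  simp_rw [expand, Finset.sum_mul]
  rw [Finset.sum_comm]
  refine Finset.sum_eq_zero fun u _ => ?_
  have hre : (∑ a : Fin m, (-1 : R) ^ ((u : ℕ) + (Fin.last j : ℕ)) *
        C (Fin.castLE hj u) a *
        (Matrix.of fun p q : Fin j =>
          C (Fin.castLE hj (u.succAbove p)) (k q)).det * C.adjugate a s)
      = (-1 : R) ^ ((u : ℕ) + (Fin.last j : ℕ)) *
        (Matrix.of fun p q : Fin j =>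
          C (Fin.castLE hj (u.succAbove p)) (k q)).det *
        ∑ a : Fin m, C (Fin.castLE hj u) a * C.adjugate a s := by
    rw [Finset.mul_sum]
    exact Finset.sum_congr rfl fun a _ => by ring
  rw [hre, hzero _ (hne u), mul_zero]
end

section
/- Let R be a commutative ring, m ≥ 1, C an m×m matrix over R with adjugate A, and v ∈ R^m. Fix an integer j with 0 ≤ j < m and indices 1 ≤ k₁ < k₂ < … < k_j ≤ m. Let B be the (j+1)×(j+1) matrix whose (u,t) entry for 1 ≤ t ≤ j is C_{u,k_t} and whose last column has entries v_u (u = 1,…,j+1); for each a ∈ {1,…,m} let B_a be the matrix obtained from B by replacing its last column with the entries C_{u,a} (u = 1,…,j+1). Then det(C) · det(B) = ∑_{a=1}^{m} det(B_a) · (A·v)_a, where A·v is the matrix-vector product of the adjugate of C with the column vector v. -/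
/-- (Denominator-free form of Statement 2, over any commutative ring.)
Let `R` be a commutative ring, `m ≥ 1`, `C` an `m×m` matrix over `R` with adjugate `A`,
and `v ∈ R^m`.  Fix `0 ≤ j < m` and strictly increasing indices `k₁ < … < k_j`.
With `B` and `B_a` as in Statement 2, one has
`det C · det B = ∑_{a=1}^m det(B_a) · (A·v)_a`. -/
theorem stmt3 {R : Type*} [CommRing R] {m j : ℕ} (hm : 1 ≤ m) (hj : j + 1 ≤ m)
    (C : Matrix (Fin m) (Fin m) R) (v : Fin m → R)
    (k : Fin j → Fin m) (hk : StrictMono k) :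
    C.det *
        (Matrix.of fun u t : Fin (j + 1) =>
          (Fin.snoc (fun t' : Fin j => C (Fin.castLE hj u) (k t'))
            (v (Fin.castLE hj u)) : Fin (j+1) → R) t).det
      = ∑ a : Fin m,
          (Matrix.of fun u t : Fin (j + 1) =>
              (Fin.snoc (fun t' : Fin j => C (Fin.castLE hj u) (k t'))
                (C (Fin.castLE hj u) a) : Fin (j+1) → R) t).det *
            (C.adjugate.mulVec v) a := by
  -- cofactor matrices (independent of the last column)
  set E : Fin (j + 1) → Matrix (Fin j) (Fin j) R := fun u =>
    Matrix.of fun p q : Fin j => C (Fin.castLE hj (u.succAbove p)) (k q) with hE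
  -- expansion of the determinant along the last column
  have key : ∀ w : Fin (j + 1) → R,
      (Matrix.of fun u t : Fin (j + 1) =>
        (Fin.snoc (fun t' : Fin j => C (Fin.castLE hj u) (k t'))
          (w u) : Fin (j+1) → R) t).det
      = ∑ u : Fin (j + 1), (-1 : R) ^ ((u : ℕ) + j) * w u * (E u).det := by
    intro w
    rw [Matrix.det_succ_column _ (Fin.last j)]
    refine Finset.sum_congr rfl fun u _ => ?_
    have h1 : (Matrix.of fun u t : Fin (j + 1) =>
        (Fin.snoc (fun t' : Fin j => C (Fin.castLE hj u) (k t'))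
          (w u) : Fin (j+1) → R) t) u (Fin.last j) = w u := by
      simp [Fin.snoc_last]
    have h2 : ((Matrix.of fun u t : Fin (j + 1) =>
        (Fin.snoc (fun t' : Fin j => C (Fin.castLE hj u) (k t'))
          (w u) : Fin (j+1) → R) t).submatrix u.succAbove (Fin.last j).succAbove) = E u := by
      ext p q
      simp [Fin.succAbove_last, Fin.snoc_castSucc, hE]
    rw [h1, h2, Fin.val_last]
  -- the adjugate identity, pointwise
  have hCv : ∀ i : Fin m, (∑ a : Fin m, C i a * (C.adjugate.mulVec v) a) = C.det * v i := by
    intro i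
    have : C.mulVec (C.adjugate.mulVec v) = C.det • v := by
      rw [Matrix.mulVec_mulVec, Matrix.mul_adjugate, Matrix.smul_mulVec,
        Matrix.one_mulVec]
    have := congrFun this i
    simpa [Matrix.mulVec, dotProduct] using this
  rw [key, Finset.mul_sum]
  have hrhs : ∀ a : Fin m,
      (Matrix.of fun u t : Fin (j + 1) =>
          (Fin.snoc (fun t' : Fin j => C (Fin.castLE hj u) (k t'))
            (C (Fin.castLE hj u) a) : Fin (j+1) → R) t).det *
          (C.adjugate.mulVec v) a
      = ∑ u : Fin (j + 1),
          (-1 : R) ^ ((u : ℕ) + j) * (E u).det *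
            (C (Fin.castLE hj u) a * (C.adjugate.mulVec v) a) := by
    intro a
    rw [key, Finset.sum_mul]
    exact Finset.sum_congr rfl fun u _ => by ring
  rw [Finset.sum_congr rfl fun a _ => hrhs a, Finset.sum_comm]
  refine Finset.sum_congr rfl fun u _ => ?_
  rw [← Finset.mul_sum, hCv]
  ring
end

section
/- Let R be a commutative ring, m ≥ 2, and C an m×m matrix over R with adjugate A. For indices 1 ≤ i < k ≤ m and 1 ≤ a < b ≤ m, one has A_{i,a}·A_{k,b} − A_{k,a}·A_{i,b} = (−1)^{i+k+a+b} · det(C) · det(C′), where C′ is the (m−2)×(m−2) matrix obtained from C by deleting its a-th and b-th rows and its i-th and k-th columns (for m = 2 one sets det(C′) = 1). -/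
open Equiv Matrix


/-- The strictly increasing embedding `Fin t → Fin (t+2)` whose range is the complement of
`{a, b}`, for `a < b` in `Fin (t+2)`: it is the composite of the two successor-above maps. -/
def delTwoEmb {t : ℕ} (a b : Fin (t + 2)) (h : a < b) : Fin t → Fin (t + 2) :=
  fun u =>
    b.succAbove
      ((⟨(a : ℕ), Nat.lt_of_lt_of_le (Fin.lt_def.mp h) (Nat.lt_succ_iff.mp b.isLt)⟩ :
          Fin (t + 1)).succAbove u)

namespace JacobiAux

variable {t : ℕ}

def loPair (a b : Fin (t + 2)) (h : a < b) : Fin (t + 1) :=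
  ⟨(a : ℕ), Nat.lt_of_lt_of_le (Fin.lt_def.mp h) (Nat.lt_succ_iff.mp b.isLt)⟩

lemma succAbove_loPair (a b : Fin (t + 2)) (h : a < b) : b.succAbove (loPair a b h) = a := by
  have hlt : Fin.castSucc (loPair a b h) < b := by
    simp [Fin.lt_def, loPair, Fin.lt_def.mp h]
  rw [Fin.succAbove_of_castSucc_lt _ _ hlt]
  exact Fin.ext rfl

lemma delTwoEmb_ne_right (a b : Fin (t + 2)) (h : a < b) (u : Fin t) :
    delTwoEmb a b h u ≠ b := Fin.succAbove_ne _ _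

lemma delTwoEmb_ne_left (a b : Fin (t + 2)) (h : a < b) (u : Fin t) :
    delTwoEmb a b h u ≠ a := by
  intro hc
  have h2 := (hc.trans (succAbove_loPair a b h).symm)
  exact Fin.succAbove_ne _ u (Fin.succAbove_right_injective h2)

lemma delTwoEmb_injective (a b : Fin (t + 2)) (h : a < b) :
    Function.Injective (delTwoEmb a b h) :=
  Fin.succAbove_right_injective.comp Fin.succAbove_right_injective

def gPerm (a b : Fin (t + 2)) (h : a < b) : Equiv.Perm (Fin (t + 2)) :=
  (Equiv.Perm.decomposeFin.symm (0, (Fin.cycleRange (loPair a b h)).symm)).trans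
    (Fin.cycleRange b).symm

lemma gPerm_zero (a b : Fin (t + 2)) (h : a < b) : gPerm a b h 0 = b := by
  simp [gPerm]

lemma gPerm_one (a b : Fin (t + 2)) (h : a < b) : gPerm a b h 1 = a := by
  simpa [gPerm, Equiv.trans_apply] using succAbove_loPair a b h

lemma gPerm_two (a b : Fin (t + 2)) (h : a < b) (u : Fin t) :
    gPerm a b h (Fin.succ (Fin.succ u)) = delTwoEmb a b h u := by
  simp [gPerm, Equiv.trans_apply, Equiv.Perm.decomposeFin_symm_apply_succ, delTwoEmb, loPair]

lemma sign_gPerm (a b : Fin (t + 2)) (h : a < b) :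
    Equiv.Perm.sign (gPerm a b h) = (-1 : ℤˣ) ^ ((a : ℕ) + (b : ℕ)) := by
  have : gPerm a b h = (Fin.cycleRange b).symm *
      (Equiv.Perm.decomposeFin.symm (0, (Fin.cycleRange (loPair a b h)).symm)) := rfl
  rw [this, _root_.map_mul]
  simp [loPair, pow_add, mul_comm]

def sumE (t : ℕ) : Fin 2 ⊕ Fin t ≃ Fin (t + 2) := finSumFinEquiv.trans (finCongr (by omega))

lemma sumE_inl0 : sumE t (Sum.inl 0) = 0 := rfl

lemma sumE_inl1 : sumE t (Sum.inl 1) = 1 := rfl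

lemma sumE_inr (u : Fin t) : sumE t (Sum.inr u) = Fin.succ (Fin.succ u) := by
  apply Fin.ext
  simp [sumE]

variable {R : Type*} [CommRing R]

lemma det_perm_block (M : Matrix (Fin (t + 2)) (Fin (t + 2)) R) (σ τ : Perm (Fin (t + 2))) :
    det M = ((Perm.sign σ : ℤ) : R) * ((Perm.sign τ : ℤ) : R) *
      det (M.submatrix ((sumE t).trans σ) ((sumE t).trans τ)) := by
  have h1 : (M.submatrix ((sumE t).trans σ) ((sumE t).trans τ)) =
      (M.submatrix σ τ).submatrix (sumE t) (sumE t) := rfl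
  rw [h1, det_submatrix_equiv_self]
  have h2 : M.submatrix ⇑σ ⇑τ = (M.submatrix id ⇑τ).submatrix ⇑σ id := rfl
  rw [h2, det_permute, det_permute']
  have hσ : ((Perm.sign σ : ℤ) : R) * ((Perm.sign σ : ℤ) : R) = 1 := by
    rw [← Int.cast_mul, ← Units.val_mul, ← sq, Int.units_sq, Units.val_one, Int.cast_one]
  have hτ : ((Perm.sign τ : ℤ) : R) * ((Perm.sign τ : ℤ) : R) = 1 := by
    rw [← Int.cast_mul, ← Units.val_mul, ← sq, Int.units_sq, Units.val_one, Int.cast_one]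
  linear_combination (-(det M * ((Perm.sign τ : ℤ) : R) * ((Perm.sign τ : ℤ) : R))) * hσ
    - det M * hτ


lemma detE (C : Matrix (Fin (t + 2)) (Fin (t + 2)) R) (i k a b : Fin (t + 2)) (hik : i < k) :
    det (((1 : Matrix (Fin (t + 2)) (Fin (t + 2)) R).updateCol i
        (fun r => C.adjugate r a)).updateCol k (fun r => C.adjugate r b)) =
      C.adjugate i a * C.adjugate k b - C.adjugate k a * C.adjugate i b := by
  set E := ((1 : Matrix (Fin (t + 2)) (Fin (t + 2)) R).updateCol i
      (fun r => C.adjugate r a)).updateCol k (fun r => C.adjugate r b) with hEdef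
  have e0 : gPerm i k hik (sumE t (Sum.inl 0)) = k := by
    rw [sumE_inl0, gPerm_zero]
  have e1 : gPerm i k hik (sumE t (Sum.inl 1)) = i := by
    rw [sumE_inl1, gPerm_one]
  have e2 : ∀ u, gPerm i k hik (sumE t (Sum.inr u)) = delTwoEmb i k hik u := fun u => by
    rw [sumE_inr, gPerm_two]
  have hEk : ∀ r, E r k = C.adjugate r b := fun r => updateCol_self
  have hEi : ∀ r, E r i = C.adjugate r a := fun r => by
    rw [hEdef, updateCol_ne hik.ne, updateCol_self]
  have hEo : ∀ r j, j ≠ i → j ≠ k → E r j = (1 : Matrix (Fin (t+2)) (Fin (t+2)) R) r j :=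
    fun r j h1 h2 => by rw [hEdef, updateCol_ne h2, updateCol_ne h1]
  have hE : E.submatrix ((sumE t).trans (gPerm i k hik)) ((sumE t).trans (gPerm i k hik)) =
      fromBlocks
        !![C.adjugate k b, C.adjugate k a; C.adjugate i b, C.adjugate i a]
        0
        (Matrix.of fun (u : Fin t) (x : Fin 2) =>
          C.adjugate (delTwoEmb i k hik u) (if x = 0 then b else a))
        (1 : Matrix (Fin t) (Fin t) R) := by
    apply Matrix.ext
    rintro (x | u) (y | v)
    · fin_cases x <;> fin_cases y <;>
        simp [submatrix_apply, e0, e1, hEk, hEi]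
    · fin_cases x <;>
        simp [submatrix_apply, e0, e1, e2, hEo _ _ (delTwoEmb_ne_left i k hik v)
            (delTwoEmb_ne_right i k hik v), Matrix.one_apply,
          (delTwoEmb_ne_left i k hik v).symm, (delTwoEmb_ne_right i k hik v).symm]
    · fin_cases y <;> simp [submatrix_apply, e0, e1, e2, hEk, hEi]
    · rw [submatrix_apply, Equiv.trans_apply, Equiv.trans_apply, e2, e2,
        hEo _ _ (delTwoEmb_ne_left i k hik v) (delTwoEmb_ne_right i k hik v)]
      simp [Matrix.one_apply, fromBlocks, (delTwoEmb_injective i k hik).eq_iff]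
  rw [det_perm_block E (gPerm i k hik) (gPerm i k hik), hE, det_fromBlocks_zero₁₂,
    det_fin_two_of, det_one]
  have hσ : ((Perm.sign (gPerm i k hik) : ℤ) : R) * ((Perm.sign (gPerm i k hik) : ℤ) : R) = 1 := by
    rw [← Int.cast_mul, ← Units.val_mul, ← sq, Int.units_sq, Units.val_one, Int.cast_one]
  linear_combination (C.adjugate k b * C.adjugate i a -
    C.adjugate k a * C.adjugate i b) * hσ


lemma key (C : Matrix (Fin (t + 2)) (Fin (t + 2)) R) (i k a b : Fin (t + 2))
    (hik : i < k) (hab : a < b) :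
    C.det * (C.adjugate i a * C.adjugate k b - C.adjugate k a * C.adjugate i b) =
      C.det * ((-1 : R) ^ ((i : ℕ) + (k : ℕ) + (a : ℕ) + (b : ℕ)) * C.det *
        (Matrix.of fun u v : Fin t =>
          C (delTwoEmb a b hab u) (delTwoEmb i k hik v)).det) := by
  rw [← detE C i k a b hik, ← det_mul]
  set E := ((1 : Matrix (Fin (t + 2)) (Fin (t + 2)) R).updateCol i
      (fun r => C.adjugate r a)).updateCol k (fun r => C.adjugate r b) with hEdef
  set F : Matrix (Fin (t + 2)) (Fin (t + 2)) R := Matrix.of fun r j =>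
    if j = k then (if r = b then C.det else 0)
    else if j = i then (if r = a then C.det else 0) else C r j with hFdef
  have hCE : C * E = F := by
    ext r j
    rw [mul_apply]
    by_cases hjk : j = k
    · subst hjk
      have : ∀ s, C r s * E s j = C r s * C.adjugate s b := fun s => by
        rw [hEdef, updateCol_self]
      rw [Finset.sum_congr rfl fun s _ => this s, ← mul_apply, mul_adjugate,
        Matrix.smul_apply, one_apply, hFdef]
      simp [smul_eq_mul, mul_ite]
    · by_cases hji : j = i
      · subst hji
        have : ∀ s, C r s * E s j = C r s * C.adjugate s a := fun s => by
          rw [hEdef, updateCol_ne hjk, updateCol_self]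
        rw [Finset.sum_congr rfl fun s _ => this s, ← mul_apply, mul_adjugate,
          Matrix.smul_apply, one_apply, hFdef]
        simp [hjk, smul_eq_mul, mul_ite]
      · have : ∀ s, C r s * E s j = C r s * (1 : Matrix (Fin (t+2)) (Fin (t+2)) R) s j :=
          fun s => by rw [hEdef, updateCol_ne hjk, updateCol_ne hji]
        rw [Finset.sum_congr rfl fun s _ => this s, ← mul_apply, mul_one, hFdef]
        simp [hjk, hji]
  rw [hCE, det_perm_block F (gPerm a b hab) (gPerm i k hik)]
  have f0 : gPerm a b hab (sumE t (Sum.inl 0)) = b := by rw [sumE_inl0, gPerm_zero]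
  have f1 : gPerm a b hab (sumE t (Sum.inl 1)) = a := by rw [sumE_inl1, gPerm_one]
  have f2 : ∀ u, gPerm a b hab (sumE t (Sum.inr u)) = delTwoEmb a b hab u := fun u => by
    rw [sumE_inr, gPerm_two]
  have e0 : gPerm i k hik (sumE t (Sum.inl 0)) = k := by rw [sumE_inl0, gPerm_zero]
  have e1 : gPerm i k hik (sumE t (Sum.inl 1)) = i := by rw [sumE_inl1, gPerm_one]
  have e2 : ∀ u, gPerm i k hik (sumE t (Sum.inr u)) = delTwoEmb i k hik u := fun u => by
    rw [sumE_inr, gPerm_two]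
  have hF : F.submatrix ((sumE t).trans (gPerm a b hab)) ((sumE t).trans (gPerm i k hik)) =
      fromBlocks
        !![C.det, 0; 0, C.det]
        (Matrix.of fun (x : Fin 2) (v : Fin t) =>
          C (if x = 0 then b else a) (delTwoEmb i k hik v))
        0
        (Matrix.of fun u v : Fin t =>
          C (delTwoEmb a b hab u) (delTwoEmb i k hik v)) := by
    apply Matrix.ext
    rintro (x | u) (y | v)
    · fin_cases x <;> fin_cases y <;>
        simp [submatrix_apply, f0, f1, e0, e1, hFdef, hik.ne, hik.ne', hab.ne, hab.ne']
    · fin_cases x <;>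
        simp [submatrix_apply, f0, f1, e2, hFdef, delTwoEmb_ne_left i k hik v,
          delTwoEmb_ne_right i k hik v]
    · fin_cases y <;>
        simp [submatrix_apply, f2, e0, e1, hFdef, delTwoEmb_ne_left a b hab u,
          delTwoEmb_ne_right a b hab u]
    · simp [submatrix_apply, f2, e2, hFdef, delTwoEmb_ne_left i k hik v,
        delTwoEmb_ne_right i k hik v]
  rw [hF, det_fromBlocks_zero₂₁, det_fin_two_of, sign_gPerm, sign_gPerm]
  push_cast
  ring
end JacobiAux

open JacobiAux in
/-- Jacobi's theorem on 2×2 minors of the adjugate.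
Let `R` be a commutative ring, `m = t + 2 ≥ 2`, and `C` an `m×m` matrix over `R` with
adjugate `A`.  For indices `i < k` and `a < b` one has
`A_{i,a}·A_{k,b} − A_{k,a}·A_{i,b} = (−1)^{i+k+a+b} · det(C) · det(C′)`,
where `C′` is obtained from `C` by deleting rows `a, b` and columns `i, k`.
(The sign with 1-based indices equals the sign with 0-based indices.) -/
theorem stmt5 {R : Type*} [CommRing R] {t : ℕ}
    (C : Matrix (Fin (t + 2)) (Fin (t + 2)) R)
    (i k a b : Fin (t + 2)) (hik : i < k) (hab : a < b) :
    C.adjugate i a * C.adjugate k b - C.adjugate k a * C.adjugate i b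
      = (-1 : R) ^ ((i : ℕ) + (k : ℕ) + (a : ℕ) + (b : ℕ)) * C.det *
          (Matrix.of fun u v : Fin t =>
            C (delTwoEmb a b hab u) (delTwoEmb i k hik v)).det := by

  set A' := Matrix.mvPolynomialX (Fin (t + 2)) (Fin (t + 2)) ℤ with hA'
  have hgen : A'.adjugate i a * A'.adjugate k b - A'.adjugate k a * A'.adjugate i b
      = (-1) ^ ((i : ℕ) + (k : ℕ) + (a : ℕ) + (b : ℕ)) * A'.det *
        (Matrix.of fun u v : Fin t =>
          A' (delTwoEmb a b hab u) (delTwoEmb i k hik v)).det :=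
    mul_left_cancel₀ (Matrix.det_mvPolynomialX_ne_zero _ ℤ) (key A' i k a b hik hab)
  set φ := (MvPolynomial.aeval fun p : Fin (t + 2) × Fin (t + 2) => C p.1 p.2 :
    MvPolynomial (Fin (t + 2) × Fin (t + 2)) ℤ →ₐ[ℤ] R) with hφ
  have hC : φ.mapMatrix A' = C := Matrix.mvPolynomialX_mapMatrix_aeval ℤ C
  have hadj : ∀ x y, φ (A'.adjugate x y) = C.adjugate x y := fun x y => by
    rw [← hC, ← AlgHom.map_adjugate]
    rfl
  have hdet : φ A'.det = C.det := by
    rw [← hC, ← AlgHom.map_det]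
  have hdet2 : φ (Matrix.of fun u v : Fin t =>
        A' (delTwoEmb a b hab u) (delTwoEmb i k hik v)).det
      = (Matrix.of fun u v : Fin t =>
          C (delTwoEmb a b hab u) (delTwoEmb i k hik v)).det := by
    rw [AlgHom.map_det]
    congr 1
    ext u v
    show φ (A' (delTwoEmb a b hab u) (delTwoEmb i k hik v)) = _
    rw [← hC]
    rfl
  have h := congrArg φ hgen
  simp only [map_sub, _root_.map_mul, map_pow, map_neg, _root_.map_one, hadj, hdet, hdet2] at h
  exact h
end

section
/- Let p be a prime with p > 2, m ≥ 1, λ : {1,…,m} → ℤ a function, and i, k ∈ {1,…,m}. Let μ = λ − δ_i and ν = λ − δ_k, i.e., μ_t = λ_t − 1 if t = i and μ_t = λ_t otherwise, and similarly for ν with k in place of i. Suppose there exists a permutation σ of {1,…,m} such that μ_t − t ≡ ν_{σ(t)} − σ(t) (mod p) for every t ∈ {1,…,m}. Then λ_i − i ≡ λ_k − k (mod p). -/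
/-- GL(m) part of Lemma 5.4.  Let `p > 2` be a prime, `m ≥ 1`,
`λ : {1,…,m} → ℤ` (positions encoded by `Fin m`, position of `t : Fin m` being `t + 1`),
and `i, k` indices.  Let `μ = λ − δ_i` and `ν = λ − δ_k`.  If there is a permutation `σ`
of the positions with `μ_t − t ≡ ν_{σ(t)} − σ(t) (mod p)` for all `t`, then
`λ_i − i ≡ λ_k − k (mod p)`. -/
theorem stmt7 {p : ℕ} (hp : p.Prime) (hp2 : 2 < p) {m : ℕ} (hm : 1 ≤ m)
    (lam : Fin m → ℤ) (i k : Fin m) (σ : Equiv.Perm (Fin m))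
    (hσ : ∀ t : Fin m,
      Int.ModEq (p : ℤ)
        ((if t = i then lam t - 1 else lam t) - (((t : ℕ) : ℤ) + 1))
        ((if σ t = k then lam (σ t) - 1 else lam (σ t)) - (((σ t : ℕ) : ℤ) + 1))) :
    Int.ModEq (p : ℤ) (lam i - (((i : ℕ) : ℤ) + 1)) (lam k - (((k : ℕ) : ℤ) + 1)) := by
  haveI : Fact (1 < p) := ⟨hp.one_lt⟩
  rcases eq_or_ne i k with rfl | hik
  · rfl
  -- pass to ZMod p
  set g : Fin m → ZMod p := fun t => ((lam t - (((t : ℕ) : ℤ) + 1) : ℤ) : ZMod p) with hg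
  set h : Fin m → ZMod p := fun t => g t - if t = i then 1 else 0 with hh
  set h' : Fin m → ZMod p := fun t => g t - if t = k then 1 else 0 with hh'
  have key : ∀ t, h t = h' (σ t) := by
    intro t
    have := (ZMod.intCast_eq_intCast_iff _ _ _).mpr (hσ t)
    simp only [hh, hh', hg]
    split_ifs at this ⊢ with h1 h2 <;> push_cast at this ⊢ <;> linear_combination this
  -- multiset of h-values equals multiset of h'-values
  have hmult : Finset.univ.val.map h = Finset.univ.val.map h' := by
    have h1 : Finset.univ.val.map h = Finset.univ.val.map (h' ∘ σ) := by
      apply Multiset.map_congr rfl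
      intro t _; exact key t
    have h2 : Multiset.map (⇑σ) Finset.univ.val = Finset.univ.val := by
      have := congrArg Finset.val (Finset.map_univ_equiv σ)
      simpa [Finset.map_val] using this
    rw [h1, ← Multiset.map_map, h2]
  -- split off i and k
  have hknd : k ∈ Finset.univ.val.erase i := by
    exact Multiset.mem_erase_of_ne hik.symm |>.mpr (Finset.mem_val.mpr (Finset.mem_univ k))
  have hsplit : Finset.univ.val = i ::ₘ k ::ₘ ((Finset.univ.val.erase i).erase k) := by
    rw [Multiset.cons_erase hknd, Multiset.cons_erase (Finset.mem_val.mpr (Finset.mem_univ i))]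
  set s : Multiset (Fin m) := (Finset.univ.val.erase i).erase k with hs
  have hnotik : ∀ t ∈ s, t ≠ i ∧ t ≠ k := by
    intro t ht
    rw [hs] at ht
    have hnd : (Finset.univ : Finset (Fin m)).val.Nodup := (Finset.univ : Finset (Fin m)).nodup
    refine ⟨fun hti => ?_, fun htk => ?_⟩
    · subst hti
      exact hnd.not_mem_erase (Multiset.mem_of_mem_erase ht)
    · subst htk
      exact (hnd.erase i).not_mem_erase ht
  have hcongr : s.map h = s.map h' := by
    apply Multiset.map_congr rfl
    intro t ht
    obtain ⟨h1, h2⟩ := hnotik t ht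
    simp [hh, hh', h1, h2]
  rw [hsplit] at hmult
  simp only [Multiset.map_cons] at hmult
  rw [hcongr] at hmult
  have hpair : h i ::ₘ {h k} + s.map h' = h' i ::ₘ {h' k} + s.map h' := by
    simpa [Multiset.cons_add, Multiset.singleton_add] using hmult
  have hpair2 : (h i ::ₘ {h k} : Multiset (ZMod p)) = h' i ::ₘ {h' k} :=
    add_right_cancel hpair
  have hmem : h i ∈ (h' i ::ₘ {h' k} : Multiset (ZMod p)) := by
    rw [← hpair2]; exact Multiset.mem_cons_self _ _
  have hone : (1 : ZMod p) ≠ 0 := one_ne_zero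
  have hgik : g i = g k := by
    rcases Multiset.mem_cons.mp hmem with hc | hc
    · exfalso
      simp only [hh, hh'] at hc
      rw [if_true, if_neg hik] at hc
      exact hone (by linear_combination -hc)
    · rw [Multiset.mem_singleton] at hc
      simp only [hh, hh'] at hc
      rw [if_true] at hc
      linear_combination hc
  have := (ZMod.intCast_eq_intCast_iff _ _ _).mp hgik
  exact this
end

section
/- Let p be a prime with p > 2, n ≥ 1, λ : {1,…,n} → ℤ a function, and j, l ∈ {1,…,n}. Let μ = λ + δ_j and ν = λ + δ_l, i.e., μ_t = λ_t + 1 if t = j and μ_t = λ_t otherwise, and similarly for ν with l in place of j. Suppose there exists a permutation σ of {1,…,n} such that μ_t − t ≡ ν_{σ(t)} − σ(t) (mod p) for every t ∈ {1,…,n}. Then λ_j − j ≡ λ_l − l (mod p). -/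
/-- GL(n) part of Lemma 5.4.  Let `p > 2` be a prime, `n ≥ 1`,
`λ : {1,…,n} → ℤ` (positions encoded by `Fin n`, position of `t : Fin n` being `t + 1`),
and `j, l` indices.  Let `μ = λ + δ_j` and `ν = λ + δ_l`.  If there is a permutation `σ`
of the positions with `μ_t − t ≡ ν_{σ(t)} − σ(t) (mod p)` for all `t`, then
`λ_j − j ≡ λ_l − l (mod p)`. -/
theorem stmt8 {p : ℕ} (hp : p.Prime) (hp2 : 2 < p) {n : ℕ} (hn : 1 ≤ n)
    (lam : Fin n → ℤ) (j l : Fin n) (σ : Equiv.Perm (Fin n))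
    (hσ : ∀ t : Fin n,
      Int.ModEq (p : ℤ)
        ((if t = j then lam t + 1 else lam t) - (((t : ℕ) : ℤ) + 1))
        ((if σ t = l then lam (σ t) + 1 else lam (σ t)) - (((σ t : ℕ) : ℤ) + 1))) :
    Int.ModEq (p : ℤ) (lam j - (((j : ℕ) : ℤ) + 1)) (lam l - (((l : ℕ) : ℤ) + 1)) := by
  haveI : Fact p.Prime := ⟨hp⟩
  by_cases hjl : j = l
  · subst hjl; exact Int.ModEq.refl _
  set g : Fin n → ZMod p := fun t => ((lam t - (((t : ℕ) : ℤ) + 1) : ℤ) : ZMod p) with hg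
  suffices hgl : g j = g l by
    exact (ZMod.intCast_eq_intCast_iff _ _ _).mp hgl
  -- translate the hypothesis into ZMod p
  by_contra hne
  -- the two filtered sets have the same cardinality via σ
  set F : Fin n → ZMod p := fun t => g t + (if t = j then 1 else 0) with hF
  set G : Fin n → ZMod p := fun s => g s + (if s = l then 1 else 0) with hG
  have key : ∀ t, F t = G (σ t) := by
    intro t
    have h := (ZMod.intCast_eq_intCast_iff _ _ _).mpr (hσ t)
    simp only [hF, hG, hg]
    split_ifs at h ⊢ <;> push_cast at h ⊢ <;> linear_combination h
  have hcard : (Finset.univ.filter fun t => F t = g j).card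
      = (Finset.univ.filter fun s => G s = g j).card := by
    apply Finset.card_bij (fun t _ => σ t)
    · intro t ht
      simp only [Finset.mem_filter, Finset.mem_univ, true_and] at ht ⊢
      rw [← key t]; exact ht
    · intro a _ b _ hab
      exact σ.injective hab
    · intro s hs
      refine ⟨σ.symm s, ?_, by simp⟩
      simp only [Finset.mem_filter, Finset.mem_univ, true_and] at hs ⊢
      rw [key (σ.symm s)]
      simpa using hs
  set S : Finset (Fin n) := Finset.univ.filter fun t => g t = g j with hS
  have hone : (1 : ZMod p) ≠ 0 := one_ne_zero
  have hFeq : (Finset.univ.filter fun t => F t = g j) = S.erase j := by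
    ext t
    by_cases ht : t = j
    · subst ht
      simp [hS, hF, add_eq_left]
    · simp [hS, hF, ht]
  have hsub : S ⊆ Finset.univ.filter fun s => G s = g j := by
    intro t ht
    simp only [hS, Finset.mem_filter, Finset.mem_univ, true_and] at ht
    simp only [Finset.mem_filter, Finset.mem_univ, true_and, hG]
    have htl : t ≠ l := by
      rintro rfl
      exact hne ht.symm
    simp [htl, ht]
  have hjS : j ∈ S := by simp [hS]
  have h1 : (S.erase j).card < S.card :=
    Finset.card_erase_lt_of_mem hjS
  have h2 : S.card ≤ (Finset.univ.filter fun s => G s = g j).card :=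
    Finset.card_le_card hsub
  rw [hFeq] at hcard
  omega
end

section
/- Let p be a prime with p > 2, m, n ≥ 1, λ⁺ : {1,…,m} → ℤ and λ⁻ : {1,…,n} → ℤ functions, i, k ∈ {1,…,m}, and j, l ∈ {1,…,n}. Define ω_{ij} = λ⁺_i + λ⁻_j + m + 1 − i − j and ω_{kl} = λ⁺_k + λ⁻_l + m + 1 − k − l. Suppose there exists a permutation σ⁺ of {1,…,m} such that (λ⁺ − δ_i)_t − t ≡ (λ⁺ − δ_k)_{σ⁺(t)} − σ⁺(t) (mod p) for every t ∈ {1,…,m}, and there exists a permutation σ⁻ of {1,…,n} such that (λ⁻ + δ_j)_t − t ≡ (λ⁻ + δ_l)_{σ⁻(t)} − σ⁻(t) (mod p) for every t ∈ {1,…,n}. Then ω_{ij} ≡ 0 (mod p) if and only if ω_{kl} ≡ 0 (mod p). -/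
open Polynomial Finset in
private lemma stmt9_key {K : Type*} [Field K] {m : ℕ} (a : Fin m → K) (i k : Fin m)
    (σ : Equiv.Perm (Fin m)) (c : K) (hc : c ≠ 0)
    (h : ∀ t, a t + (if t = i then c else 0) = a (σ t) + (if σ t = k then c else 0)) :
    a i = a k := by
  classical
  rcases eq_or_ne i k with rfl | hik
  · rfl
  set g : Fin m → K := fun t => a t + (if t = i then c else 0) with hg
  set h' : Fin m → K := fun t => a t + (if t = k then c else 0) with hh'
  have hP : ∏ t, (X - C (g t)) = ∏ t, (X - C (h' t)) := by
    calc ∏ t, (X - C (g t)) = ∏ t, (X - C (h' (σ t))) :=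
          Finset.prod_congr rfl fun t _ => congrArg (fun x => X - C x) (h t)
      _ = _ := Equiv.prod_comp σ (fun t => X - C (h' t))
  have hk : k ∈ Finset.univ.erase i := by simp [hik.symm]
  have decomp : ∀ f : Fin m → K, ∏ t, (X - C (f t)) =
      (X - C (f i)) * ((X - C (f k)) * ∏ t ∈ (Finset.univ.erase i).erase k, (X - C (f t))) := by
    intro f
    rw [← Finset.mul_prod_erase _ _ (Finset.mem_univ i), ← Finset.mul_prod_erase _ _ hk]
  set R : K[X] := ∏ t ∈ (Finset.univ.erase i).erase k, (X - C (a t)) with hR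
  have hrest : ∀ f : Fin m → K, (∀ t, t ≠ i → t ≠ k → f t = a t) →
      ∏ t ∈ (Finset.univ.erase i).erase k, (X - C (f t)) = R := by
    intro f hf
    refine Finset.prod_congr rfl fun t ht => ?_
    simp only [Finset.mem_erase, Finset.mem_univ, and_true] at ht
    rw [hf t ht.2 ht.1]
  have hgr : ∀ t, t ≠ i → t ≠ k → g t = a t := fun t h1 _ => by simp [hg, h1]
  have hhr : ∀ t, t ≠ i → t ≠ k → h' t = a t := fun t _ h2 => by simp [hh', h2]
  rw [decomp g, decomp h', hrest g hgr, hrest h' hhr, ← mul_assoc, ← mul_assoc] at hP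
  have hRne : R ≠ 0 := by
    rw [hR]
    exact Finset.prod_ne_zero_iff.mpr fun t _ => X_sub_C_ne_zero (a t)
  have hq : (X - C (g i)) * (X - C (g k)) = (X - C (h' i)) * (X - C (h' k)) :=
    mul_right_cancel₀ hRne hP
  have hev := congrArg (Polynomial.eval (a i)) hq
  simp only [eval_mul, eval_sub, eval_X, eval_C, hg, hh', if_pos rfl,
    if_neg (Ne.symm hik), if_neg hik, if_true, ite_true, eq_self_iff_true, add_zero] at hev
  have hev' : -c * (a i - a k) = 0 := by linear_combination hev
  rcases mul_eq_zero.mp hev' with h0 | h0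
  · exact absurd (neg_eq_zero.mp h0) hc
  · exact sub_eq_zero.mp h0

/-- final assertion of Lemma 5.4.  Let `p > 2` be a prime, `m, n ≥ 1`,
`λ⁺ : {1,…,m} → ℤ`, `λ⁻ : {1,…,n} → ℤ` (positions encoded by `Fin m`, `Fin n`, the
position of `t` being `t + 1`), `i, k ∈ {1,…,m}`, `j, l ∈ {1,…,n}`, and set
`ω_{ij} = λ⁺_i + λ⁻_j + m + 1 − i − j`, `ω_{kl} = λ⁺_k + λ⁻_l + m + 1 − k − l`.
If there are permutations `σ⁺` of `{1,…,m}` and `σ⁻` of `{1,…,n}` with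
`(λ⁺ − δ_i)_t − t ≡ (λ⁺ − δ_k)_{σ⁺(t)} − σ⁺(t) (mod p)` for all `t`, and
`(λ⁻ + δ_j)_t − t ≡ (λ⁻ + δ_l)_{σ⁻(t)} − σ⁻(t) (mod p)` for all `t`, then
`ω_{ij} ≡ 0 (mod p)` if and only if `ω_{kl} ≡ 0 (mod p)`. -/
theorem stmt9 {p : ℕ} (hp : p.Prime) (hp2 : 2 < p) {m n : ℕ} (hm : 1 ≤ m) (hn : 1 ≤ n)
    (lamp : Fin m → ℤ) (lamm : Fin n → ℤ) (i k : Fin m) (j l : Fin n)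
    (σp : Equiv.Perm (Fin m))
    (hσp : ∀ t : Fin m,
      Int.ModEq (p : ℤ)
        ((if t = i then lamp t - 1 else lamp t) - (((t : ℕ) : ℤ) + 1))
        ((if σp t = k then lamp (σp t) - 1 else lamp (σp t)) - (((σp t : ℕ) : ℤ) + 1)))
    (σm : Equiv.Perm (Fin n))
    (hσm : ∀ t : Fin n,
      Int.ModEq (p : ℤ)
        ((if t = j then lamm t + 1 else lamm t) - (((t : ℕ) : ℤ) + 1))
        ((if σm t = l then lamm (σm t) + 1 else lamm (σm t)) - (((σm t : ℕ) : ℤ) + 1))) :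
    Int.ModEq (p : ℤ)
        (lamp i + lamm j + (m : ℤ) + 1 - (((i : ℕ) : ℤ) + 1) - (((j : ℕ) : ℤ) + 1)) 0 ↔
      Int.ModEq (p : ℤ)
        (lamp k + lamm l + (m : ℤ) + 1 - (((k : ℕ) : ℤ) + 1) - (((l : ℕ) : ℤ) + 1)) 0 := by
  haveI : Fact p.Prime := ⟨hp⟩
  have e1 : ((lamp i : ZMod p) - ((i : ℕ) : ZMod p)) =
      ((lamp k : ZMod p) - ((k : ℕ) : ZMod p)) := by
    have hkey := stmt9_key (K := ZMod p)
      (fun t => (lamp t : ZMod p) - ((t : ℕ) : ZMod p)) i k σp (-1) (by simp) ?_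
    · linear_combination hkey
    · intro t
      have h2 := (ZMod.intCast_eq_intCast_iff _ _ _).mpr (hσp t)
      split_ifs at h2 ⊢ <;> push_cast at h2 ⊢ <;> linear_combination h2
  have e2 : ((lamm j : ZMod p) - ((j : ℕ) : ZMod p)) =
      ((lamm l : ZMod p) - ((l : ℕ) : ZMod p)) := by
    have hkey := stmt9_key (K := ZMod p)
      (fun t => (lamm t : ZMod p) - ((t : ℕ) : ZMod p)) j l σm 1 one_ne_zero ?_
    · linear_combination hkey
    · intro t
      have h2 := (ZMod.intCast_eq_intCast_iff _ _ _).mpr (hσm t)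
      split_ifs at h2 ⊢ <;> push_cast at h2 ⊢ <;> linear_combination h2
  constructor <;> intro H
  · have H' := (ZMod.intCast_eq_intCast_iff _ _ _).mpr H
    apply (ZMod.intCast_eq_intCast_iff _ _ _).mp
    push_cast at H' ⊢
    linear_combination H' - e1 - e2
  · have H' := (ZMod.intCast_eq_intCast_iff _ _ _).mpr H
    apply (ZMod.intCast_eq_intCast_iff _ _ _).mp
    push_cast at H' ⊢
    linear_combination H' + e1 + e2
end
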